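/- Linear check soundness of hypergraph product expander codes: Consider a classical code with n_cla bits and m_cla = ζ·n_cla checks given by parity-check matrix H ∈ F₂^{C×B}. Suppose the minimum Hamming weight d_cla of a nonzero u with H·u = 0 and the minimum Hamming weight d_cla^T of a nonzero w with Hᵀ·w = 0 both satisfy d_cla, d_cla^T ≥ ξ·n_cla, and suppose both the classical code and its transpose code have (χ·n_cla, η)-linear-check-expansion. Set n := n_cla² + m_cla² and χ' := min(√2·χ, ξ)/√(1+ζ²). Then the hypergraph product of the classical code with itself has (χ'·√n, f)-check-soundness with f(M) = 6M/η: every stabilizer of the hypergraph product code of weight M < χ'·√n is the F₂-sum of at most 6M/η distinct checks. -/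

import Mathlib

/-- Qubits of the hypergraph product of a classical code (with `nc` bits, `mc` checks)
with itself: pairs of bits and pairs of checks. -/
abbrev HGPQubit (nc mc : ℕ) := (Fin nc × Fin nc) ⊕ (Fin mc × Fin mc)

/-- Support of an `F₂`-vector indexed by the HGP qubits. -/
def hgpSupp {nc mc : ℕ} (v : HGPQubit nc mc → ZMod 2) : Finset (HGPQubit nc mc) :=
  Finset.univ.filter fun q => v q ≠ 0

/-- The Z-check of the HGP code indexed by a bit `b` and a check `c̃`. -/
def hgpZcheck {nc mc : ℕ} (H : Matrix (Fin mc) (Fin nc) (ZMod 2))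
    (b : Fin nc) (ct : Fin mc) : HGPQubit nc mc → ZMod 2 :=
  fun q => match q with
  | Sum.inl (b', bt) => if b' = b then H ct bt else 0
  | Sum.inr (c, ct') => if ct' = ct then H c b else 0

/-- The X-check of the HGP code indexed by a check `c` and a bit `b̃`. -/
def hgpXcheck {nc mc : ℕ} (H : Matrix (Fin mc) (Fin nc) (ZMod 2))
    (c : Fin mc) (bt : Fin nc) : HGPQubit nc mc → ZMod 2 :=
  fun q => match q with
  | Sum.inl (b, bt') => if bt' = bt then H c b else 0
  | Sum.inr (c', ct) => if c' = c then H ct bt else 0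

/-- Hamming weight of an `F₂`-vector on `Fin k`. -/
def hamWt {k : ℕ} (v : Fin k → ZMod 2) : ℕ :=
  (Finset.univ.filter fun i => v i ≠ 0).card

open Finset

abbrev F2 := ZMod 2

def hamWt' {k : ℕ} (v : Fin k → F2) : ℕ :=
  (Finset.univ.filter fun i => v i ≠ 0).card

def msupp {a b : ℕ} (G : Matrix (Fin a) (Fin b) F2) : Finset (Fin a × Fin b) :=
  Finset.univ.filter fun p => G p.1 p.2 ≠ 0

lemma zmod2_ne_zero : ∀ r : F2, r ≠ 0 → r = 1 := by decide

lemma zmod2_cases : ∀ r : F2, r = 0 ∨ r = 1 := by decide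

lemma zmod2_add_self (r : F2) : r + r = 0 := by revert r; decide

lemma sum_symmDiff_char2 {ι : Type*} [DecidableEq ι] {M : Type*} [AddCommGroup M]
    (hM : ∀ v : M, v + v = 0) (s t : Finset ι) (f : ι → M) :
    ∑ i ∈ symmDiff s t, f i = (∑ i ∈ s, f i) + (∑ i ∈ t, f i) := by
  classical
  have hs : ∑ i ∈ s, f i = (∑ i ∈ s \ t, f i) + (∑ i ∈ s ∩ t, f i) := by
    rw [← Finset.sum_union (Finset.sdiff_disjoint.mono_right Finset.inter_subset_right)]
    congr 1
    ext a; simp [Finset.mem_union, Finset.mem_sdiff, Finset.mem_inter]; tauto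
  have ht : ∑ i ∈ t, f i = (∑ i ∈ t \ s, f i) + (∑ i ∈ s ∩ t, f i) := by
    rw [← Finset.sum_union (Finset.sdiff_disjoint.mono_right Finset.inter_subset_left)]
    congr 1
    ext a; simp [Finset.mem_union, Finset.mem_sdiff, Finset.mem_inter]; tauto
  have hd : symmDiff s t = (s \ t) ∪ (t \ s) := rfl
  rw [hd, Finset.sum_union disjoint_sdiff_sdiff, hs, ht]
  have h0 : (∑ i ∈ s ∩ t, f i) + (∑ i ∈ s ∩ t, f i) = 0 := hM _
  abel_nf
  rw [show (2:ℤ) • (∑ i ∈ s ∩ t, f i) = 0 from by rw [two_zsmul]; exact h0]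
  abel

/-- Every element of the `F₂`-span of a finitely-indexed family is a sum over a Finset. -/
lemma span_f2_eq_finset_sum {ι : Type*} [Fintype ι] [DecidableEq ι] {M : Type*} [AddCommGroup M]
    [Module F2 M] (f : ι → M) (x : M) (hx : x ∈ Submodule.span F2 (Set.range f)) :
    ∃ T : Finset ι, x = ∑ i ∈ T, f i := by
  classical
  have hM : ∀ v : M, v + v = 0 := by
    intro v
    have h2 : (2 : F2) = 0 := by decide
    calc v + v = (2 : F2) • v := (two_smul _ v).symm
    _ = 0 := by rw [h2, zero_smul]
  induction hx using Submodule.span_induction with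
  | mem v hv =>
      obtain ⟨i, rfl⟩ := hv
      exact ⟨{i}, by simp⟩
  | zero => exact ⟨∅, by simp⟩
  | add v w hv hw ihv ihw =>
      obtain ⟨s, rfl⟩ := ihv
      obtain ⟨t, rfl⟩ := ihw
      exact ⟨symmDiff s t, (sum_symmDiff_char2 hM s t f).symm⟩
  | smul a v hv ihv =>
      obtain ⟨s, rfl⟩ := ihv
      rcases zmod2_cases a with h | h
      · exact ⟨∅, by simp [h]⟩
      · exact ⟨s, by simp [h]⟩


/-- support card of a matrix as a sum over columns -/
lemma msupp_card_cols {a b : ℕ} (G : Matrix (Fin a) (Fin b) F2) :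
    (msupp G).card = ∑ j : Fin b, (univ.filter fun i => G i j ≠ 0).card := by
  classical
  rw [Finset.card_eq_sum_card_fiberwise (f := Prod.snd) (t := univ) (fun p _ => mem_univ _)]
  refine Finset.sum_congr rfl fun j _ => ?_
  refine Finset.card_bij (fun p _ => p.1) ?_ ?_ ?_
  · rintro ⟨i, j'⟩ hp
    simp only [mem_filter, msupp, mem_univ, true_and] at hp ⊢
    obtain ⟨h1, h2⟩ := hp; subst h2; exact h1
  · rintro ⟨i, j'⟩ hp ⟨i2, j2⟩ hq h
    simp only [mem_filter, msupp] at hp hq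
    simp only at h
    simp [Prod.ext_iff, h, hp.2, hq.2]
  · intro i hi
    simp only [mem_filter, mem_univ, true_and] at hi
    exact ⟨(i, j), by simp [msupp, hi], rfl⟩

/-- column of `Hᵀ * G` as a sum of rows of `H` over the column support of `G`. -/
lemma col_sum_eq {m n : ℕ} (H : Matrix (Fin m) (Fin n) F2) (G : Matrix (Fin m) (Fin n) F2)
    (j : Fin n) :
    (∑ c ∈ (univ.filter fun c => G c j ≠ 0), fun b => H c b) = fun b => (H.transpose * G) b j := by
  classical
  funext b
  rw [Finset.sum_apply]
  rw [Matrix.mul_apply]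
  rw [← Finset.sum_subset (Finset.subset_univ (univ.filter fun c => G c j ≠ 0))
      (fun c _ hc => ?_)]
  · refine Finset.sum_congr rfl fun c hc => ?_
    simp only [mem_filter] at hc
    rw [Matrix.transpose_apply, zmod2_ne_zero _ hc.2, mul_one]
  · simp only [mem_filter, mem_univ, true_and, not_not] at hc
    rw [hc, mul_zero]

lemma row_syndrome_eq {m n : ℕ} (H : Matrix (Fin m) (Fin n) F2) (G : Matrix (Fin m) (Fin n) F2)
    (c : Fin m) (ct : Fin m) : (G * H.transpose) c ct = H.mulVec (G c) ct := by
  classical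
  rw [Matrix.mul_apply, Matrix.mulVec, dotProduct]
  exact Finset.sum_congr rfl fun b _ => by rw [Matrix.transpose_apply, mul_comm]

/-- vectors supported inside R -/
def suppIn {m : ℕ} (R : Finset (Fin m)) : Submodule F2 (Fin m → F2) where
  carrier := {v | ∀ c, c ∉ R → v c = 0}
  add_mem' := by intro a b ha hb c hc; simp only [Pi.add_apply, ha c hc, hb c hc, add_zero]
  zero_mem' := by intro c hc; rfl
  smul_mem' := by intro r v hv c hc; simp only [Pi.smul_apply, hv c hc, smul_zero]

lemma helper (m n : ℕ) (H : Matrix (Fin m) (Fin n) F2) (η dk D : ℝ)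
    (hker : ∀ u : Fin n → F2, u ≠ 0 → H.mulVec u = 0 → dk ≤ (hamWt' u : ℝ))
    (hexp : ∀ T : Finset (Fin m), (T.card : ℝ) < D →
      η * T.card ≤ (hamWt' (∑ c ∈ T, fun b => H c b) : ℝ))
    (E : Matrix (Fin m) (Fin n) F2)
    (hRD : (((univ.filter fun c => H.mulVec (E c) ≠ 0) : Finset (Fin m)).card : ℝ) < D)
    (hM : ((msupp (H.transpose * E)).card : ℝ) + ((msupp (E * H.transpose)).card : ℝ) < dk) :
    ∃ E' : Matrix (Fin m) (Fin n) F2,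
      H.transpose * E' = H.transpose * E ∧ E' * H.transpose = E * H.transpose ∧
      η * ((msupp E').card : ℝ) ≤ ((msupp (H.transpose * E)).card : ℝ) := by
  set R : Finset (Fin m) := univ.filter fun c => H.mulVec (E c) ≠ 0 with hRdef
  set Y : Matrix (Fin m) (Fin n) F2 := fun c b => if c ∈ R then 0 else E c b with hYdef
  set Z : Matrix (Fin m) (Fin n) F2 := fun c b => if c ∈ R then E c b else 0 with hZdef
  have hYZ : ∀ c b, Y c b + Z c b = E c b := by
    intro c b; by_cases h : c ∈ R <;> simp [hYdef, hZdef, h]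
  have hYker : ∀ c, H.mulVec (Y c) = 0 := by
    intro c; by_cases h : c ∈ R
    · have : Y c = 0 := by funext b; simp [hYdef, h]
      rw [this, Matrix.mulVec_zero]
    · have hE : Y c = E c := by funext b; simp [hYdef, h]
      rw [hE]
      by_contra hc
      exact h (by simp [hRdef, hc])
  have hZsupp : ∀ b, (fun c => Z c b) ∈ suppIn R := by
    intro b c hc; simp [hZdef, hc]
  set W0 : Submodule F2 (Fin m → F2) := suppIn R with hW0
  set L : W0 →ₗ[F2] (Fin n → F2) := (Matrix.mulVecLin H.transpose).comp W0.subtype with hL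
  set U0 : Submodule F2 (Fin n → F2) := LinearMap.range L with hU0
  set Ycol : Fin n → (Fin m → F2) := fun b c => Y c b with hYcol
  -- the key vanishing computation
  have hsumzero : ∀ ct : Fin m, (∑ b : Fin n, H ct b • (H.transpose.mulVec (Ycol b))) = 0 := by
    intro ct
    have h1 : (∑ b : Fin n, H ct b • Ycol b) = 0 := by
      funext c
      have hv := congrFun (hYker c) ct
      rw [Matrix.mulVec, dotProduct] at hv
      simp only [Finset.sum_apply, Pi.smul_apply, smul_eq_mul, Pi.zero_apply] at hv ⊢
      exact hv
    have h2 : ∀ b ∈ (univ : Finset (Fin n)), H ct b • (H.transpose.mulVec (Ycol b))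
        = H.transpose.mulVecLin (H ct b • Ycol b) := by
      intro b _
      rw [map_smul, Matrix.mulVecLin_apply]
    rw [Finset.sum_congr rfl h2, ← map_sum, h1, map_zero]
  -- STEP A
  have stepA : ∀ b : Fin n, H.transpose.mulVec (Ycol b) ∈ U0 := by
    by_contra hcon
    push_neg at hcon
    obtain ⟨b0, hb0⟩ := hcon
    have hq : U0.mkQ (H.transpose.mulVec (Ycol b0)) ≠ 0 := by
      simpa [Submodule.Quotient.mk_eq_zero] using hb0
    let Bq := Module.Free.chooseBasis F2 ((Fin n → F2) ⧸ U0)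
    have hrep : Bq.repr (U0.mkQ (H.transpose.mulVec (Ycol b0))) ≠ 0 := by
      intro h
      exact hq (Bq.repr.map_eq_zero_iff.mp h)
    obtain ⟨i, hi⟩ := Finsupp.ne_iff.mp hrep
    simp only [Finsupp.coe_zero, Pi.zero_apply] at hi
    set φ : (Fin n → F2) →ₗ[F2] F2 :=
      (Finsupp.lapply i).comp ((Bq.repr : _ ≃ₗ[F2] _).toLinearMap.comp U0.mkQ) with hφ
    have hφU : ∀ u ∈ U0, φ u = 0 := by
      intro u hu
      simp only [hφ, LinearMap.comp_apply, LinearEquiv.coe_coe]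
      have hz : U0.mkQ u = 0 := (Submodule.Quotient.mk_eq_zero _).mpr hu
      rw [hz]
      simp
    have hφb0 : φ (H.transpose.mulVec (Ycol b0)) ≠ 0 := by
      simpa [hφ] using hi
    set ustar : Fin n → F2 := fun b => φ (H.transpose.mulVec (Ycol b)) with hustar
    have hu0 : ustar ≠ 0 := by
      intro h
      apply hφb0
      simpa [hustar] using congrFun h b0
    have hukernel : H.mulVec ustar = 0 := by
      funext ct
      rw [Matrix.mulVec, dotProduct]
      have : ∀ b ∈ univ, H ct b * ustar b = φ (H ct b • (H.transpose.mulVec (Ycol b))) := by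
        intro b _
        rw [map_smul, smul_eq_mul]
      rw [Finset.sum_congr rfl this, ← map_sum, hsumzero, map_zero]
      rfl
    have husupp : ∀ b : Fin n, (∀ b', (H.transpose * E) b' b = 0) → ustar b = 0 := by
      intro b hA
      have hEcol : (fun c => E c b) = Ycol b + (fun c => Z c b) := by
        funext c; rw [Pi.add_apply]; exact (hYZ c b).symm
      have h1 : H.transpose.mulVec (Ycol b) =
          H.transpose.mulVec (fun c => E c b) + H.transpose.mulVec (fun c => Z c b) := by
        rw [hEcol, Matrix.mulVec_add]
        have hZZ : H.transpose.mulVec (fun c => Z c b) + H.transpose.mulVec (fun c => Z c b) = 0 := by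
          funext b'
          have : ∀ r : F2, r + r = 0 := by decide
          exact this _
        rw [add_assoc, hZZ, add_zero]
      have h2 : H.transpose.mulVec (fun c => E c b) = 0 := by
        funext b'
        rw [Matrix.mulVec, dotProduct]
        have := hA b'
        rw [Matrix.mul_apply] at this
        exact this
      have h3 : H.transpose.mulVec (fun c => Z c b) ∈ U0 := ⟨⟨_, hZsupp b⟩, rfl⟩
      rw [hustar]
      simp only
      rw [h1, h2, zero_add]
      exact hφU _ h3
    -- counting
    have hinj : ((univ.filter fun b => ustar b ≠ 0).card : ℝ) ≤ ((msupp (H.transpose * E)).card : ℝ) := by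
      have hcard : (univ.filter fun b => ustar b ≠ 0).card ≤ (msupp (H.transpose * E)).card := by
        have hw : ∀ b ∈ (univ.filter fun b => ustar b ≠ 0), ∃ b', (H.transpose * E) b' b ≠ 0 := by
          intro b hb
          simp only [mem_filter, mem_univ, true_and] at hb
          by_contra hcc
          push_neg at hcc
          exact hb (husupp b hcc)
        refine Finset.card_le_card_of_injOn
          (fun b => (if h : ∃ b', (H.transpose * E) b' b ≠ 0 then h.choose else b0, b)) ?_ ?_
        · intro b hb
          have h := hw b hb
          simp only [Finset.mem_coe, msupp, mem_filter, mem_univ, true_and]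
          rw [dif_pos h]
          exact h.choose_spec
        · intro b1 _ b2 _ heq
          exact congrArg Prod.snd heq
      exact_mod_cast hcard
    have hdk := hker ustar hu0 hukernel
    have hle : (hamWt' ustar : ℝ) ≤ ((msupp (H.transpose * E)).card : ℝ) := by
      have h0 : hamWt' ustar = (univ.filter fun b => ustar b ≠ 0).card := rfl
      rw [h0]
      exact hinj
    have hBnn : (0:ℝ) ≤ ((msupp (E * H.transpose)).card : ℝ) := Nat.cast_nonneg _
    linarith
  -- STEP B : build the replacement representative
  have hsurjL : LinearMap.range (LinearMap.rangeRestrict L) = ⊤ := LinearMap.range_rangeRestrict L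
  obtain ⟨σ, hσ⟩ := (LinearMap.rangeRestrict L).exists_rightInverse_of_surjective hsurjL
  have hLσ : ∀ u : U0, L (σ u) = (u : Fin n → F2) := by
    intro u
    have h1 := LinearMap.congr_fun hσ u
    have h2 := congrArg (Subtype.val) h1
    simpa using h2
  set w : Fin n → U0 := fun b => ⟨H.transpose.mulVec (Ycol b), stepA b⟩ with hwdef
  set Δ : Matrix (Fin m) (Fin n) F2 := fun c b => ((σ (w b) : W0) : Fin m → F2) c with hΔdef
  set E' : Matrix (Fin m) (Fin n) F2 := fun c b => Z c b + Δ c b with hE'def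
  have hΔcol : ∀ b, (fun c => Δ c b) = ((σ (w b) : W0) : Fin m → F2) := fun b => rfl
  have hA' : H.transpose * E' = H.transpose * E := by
    have hcolE' : ∀ b, H.transpose.mulVec (fun c => E' c b) = H.transpose.mulVec (fun c => E c b) := by
      intro b
      have h1 : (fun c => E' c b) = (fun c => Z c b) + (fun c => Δ c b) := rfl
      rw [h1, Matrix.mulVec_add]
      have h2 : H.transpose.mulVec (fun c => Δ c b) = H.transpose.mulVec (Ycol b) := by
        calc H.transpose.mulVec (fun c => Δ c b) = L (σ (w b)) := by
              rw [hΔcol b]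
              rfl
          _ = (w b : Fin n → F2) := hLσ _
          _ = H.transpose.mulVec (Ycol b) := rfl
      rw [h2]
      have h3 : (fun c => E c b) = Ycol b + (fun c => Z c b) := funext fun c => (hYZ c b).symm
      rw [h3, Matrix.mulVec_add, add_comm]
    ext b' b
    rw [Matrix.mul_apply, Matrix.mul_apply]
    have hl := congrFun (hcolE' b) b'
    rw [Matrix.mulVec, Matrix.mulVec, dotProduct, dotProduct] at hl
    exact hl
  have hB' : E' * H.transpose = E * H.transpose := by
    have hrow : ∀ c, H.mulVec (E' c) = H.mulVec (E c) := by
      intro c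
      have h1 : E' c = Z c + Δ c := rfl
      rw [h1, Matrix.mulVec_add]
      have hΔrow : H.mulVec (Δ c) = 0 := by
        funext ct
        rw [Matrix.mulVec, dotProduct]
        have hterm : ∀ b ∈ (univ : Finset (Fin n)),
            H ct b * Δ c b = (W0.subtype (H ct b • σ (w b))) c := by
          intro b _
          rw [map_smul]
          simp [hΔdef, smul_eq_mul]
        rw [Finset.sum_congr rfl hterm]
        have hsum1 : (∑ b : Fin n, (W0.subtype (H ct b • σ (w b))) c)
            = (W0.subtype (∑ b : Fin n, H ct b • σ (w b))) c := by
          rw [map_sum, Finset.sum_apply]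
        rw [hsum1]
        have hsw : (∑ b : Fin n, H ct b • w b) = 0 := by
          apply Subtype.ext
          have hcoe : ((∑ b : Fin n, H ct b • w b : U0) : Fin n → F2)
              = ∑ b : Fin n, H ct b • (H.transpose.mulVec (Ycol b)) := by
            rw [show ((∑ b : Fin n, H ct b • w b : U0) : Fin n → F2)
                = (U0.subtype (∑ b : Fin n, H ct b • w b)) from rfl]
            rw [map_sum]
            refine Finset.sum_congr rfl fun b _ => ?_
            rw [map_smul]
            rfl
          rw [hcoe, hsumzero ct]
          rfl
        have hsum2 : (∑ b : Fin n, H ct b • σ (w b)) = σ (∑ b : Fin n, H ct b • w b) := by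
          rw [map_sum]
          exact Finset.sum_congr rfl fun b _ => (map_smul σ _ _).symm
        rw [hsum2, hsw, map_zero]
        simp
      rw [hΔrow, add_zero]
      rw [show E c = Y c + Z c from funext fun b => (hYZ c b).symm, Matrix.mulVec_add,
        hYker c, zero_add]
    ext c ct
    rw [row_syndrome_eq, row_syndrome_eq, hrow c]
  have hsupp' : ∀ c b, c ∉ R → E' c b = 0 := by
    intro c b hc
    have h1 : Z c b = 0 := by simp [hZdef, hc]
    have h2 : Δ c b = 0 := (σ (w b)).2 c hc
    simp [hE'def, h1, h2]
  refine ⟨E', hA', hB', ?_⟩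
  have hfib := msupp_card_cols E'
  have hfibA := msupp_card_cols (H.transpose * E)
  have hcolbound : ∀ b : Fin n, η * ((univ.filter fun c => E' c b ≠ 0).card : ℝ)
      ≤ ((univ.filter fun b' => (H.transpose * E) b' b ≠ 0).card : ℝ) := by
    intro b
    have hTsub : (univ.filter fun c => E' c b ≠ 0) ⊆ R := by
      intro c hc
      simp only [mem_filter, mem_univ, true_and] at hc
      by_contra hcR
      exact hc (hsupp' c b hcR)
    have hTlt : (((univ.filter fun c => E' c b ≠ 0)).card : ℝ) < D :=
      lt_of_le_of_lt (by exact_mod_cast Finset.card_le_card hTsub) hRD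
    have hx := hexp _ hTlt
    rw [col_sum_eq H E' b] at hx
    have hrw : hamWt' (fun b' => (H.transpose * E') b' b)
        = (univ.filter fun b' => (H.transpose * E) b' b ≠ 0).card := by
      rw [hA']
      rfl
    rw [hrw] at hx
    exact hx
  calc η * ((msupp E').card : ℝ)
      = ∑ b : Fin n, η * ((univ.filter fun c => E' c b ≠ 0).card : ℝ) := by
        rw [hfib]
        push_cast
        rw [Finset.mul_sum]
    _ ≤ ∑ b : Fin n, ((univ.filter fun b' => (H.transpose * E) b' b ≠ 0).card : ℝ) :=
        Finset.sum_le_sum fun b _ => hcolbound b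
    _ = ((msupp (H.transpose * E)).card : ℝ) := by
        rw [hfibA]
        push_cast
        ring

lemma msupp_transpose {a b : ℕ} (M : Matrix (Fin a) (Fin b) F2) :
    (msupp M.transpose).card = (msupp M).card := by
  refine Finset.card_bij (fun p _ => (p.2, p.1)) ?_ ?_ ?_
  · rintro ⟨i, j⟩ hp
    simp only [msupp, mem_filter, mem_univ, true_and, Matrix.transpose_apply] at hp ⊢
    exact (Finset.mem_filter.mp hp).2
  · rintro ⟨i1, j1⟩ _ ⟨i2, j2⟩ _ h
    simpa [Prod.ext_iff, and_comm] using h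
  · rintro ⟨i, j⟩ hp
    refine ⟨(j, i), ?_, rfl⟩
    simp only [msupp, mem_filter, mem_univ, true_and, Matrix.transpose_apply] at hp ⊢
    exact Finset.mem_filter.mpr ⟨mem_univ _, hp⟩

lemma rows_nonnull_le {m n : ℕ} (H : Matrix (Fin m) (Fin n) F2) (E : Matrix (Fin m) (Fin n) F2) :
    ((univ.filter fun c => H.mulVec (E c) ≠ 0) : Finset (Fin m)).card
      ≤ (msupp (E * H.transpose)).card := by
  refine Finset.card_le_card_of_injOn
    (fun c => (c, if h : ∃ ct, H.mulVec (E c) ct ≠ 0 then h.choose else c)) ?_ ?_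
  · intro c hc
    have hc' : H.mulVec (E c) ≠ 0 := (Finset.mem_filter.mp hc).2
    have h : ∃ ct, H.mulVec (E c) ct ≠ 0 := Function.ne_iff.mp hc'
    refine Finset.mem_coe.mpr (Finset.mem_filter.mpr ⟨mem_univ _, ?_⟩)
    show (E * H.transpose) c (if h : ∃ ct, H.mulVec (E c) ct ≠ 0 then h.choose else c) ≠ 0
    rw [dif_pos h]
    rw [row_syndrome_eq]
    exact h.choose_spec
  · intro c1 _ c2 _ h
    exact congrArg Prod.fst h

lemma core (m n : ℕ) (H : Matrix (Fin m) (Fin n) F2) (η dk D : ℝ) (hη : 0 < η)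
    (hkerN : ∀ u : Fin n → F2, u ≠ 0 → H.mulVec u = 0 → dk ≤ (hamWt' u : ℝ))
    (hkerM : ∀ u : Fin m → F2, u ≠ 0 → H.transpose.mulVec u = 0 → dk ≤ (hamWt' u : ℝ))
    (hexpM : ∀ T : Finset (Fin m), (T.card : ℝ) < D →
      η * T.card ≤ (hamWt' (∑ c ∈ T, fun b => H c b) : ℝ))
    (hexpN : ∀ T : Finset (Fin n), (T.card : ℝ) < D →
      η * T.card ≤ (hamWt' (∑ b ∈ T, fun c => H c b) : ℝ))
    (G0 : Matrix (Fin m) (Fin n) F2)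
    (hM1 : ((msupp (H.transpose * G0)).card : ℝ) + ((msupp (G0 * H.transpose)).card : ℝ) < dk)
    (hM2 : ((msupp (H.transpose * G0)).card : ℝ) + ((msupp (G0 * H.transpose)).card : ℝ)
      < Real.sqrt 2 * D) :
    ∃ G : Matrix (Fin m) (Fin n) F2,
      H.transpose * G = H.transpose * G0 ∧ G * H.transpose = G0 * H.transpose ∧
      η * ((msupp G).card : ℝ)
        ≤ ((msupp (H.transpose * G0)).card : ℝ) + ((msupp (G0 * H.transpose)).card : ℝ) := by
  classical
  set S : Finset (Matrix (Fin m) (Fin n) F2) :=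
    univ.filter fun G => H.transpose * G = H.transpose * G0 ∧ G * H.transpose = G0 * H.transpose
    with hSdef
  have hG0S : G0 ∈ S := by simp [hSdef]
  obtain ⟨E, hES, hEmin⟩ := S.exists_min_image (fun G => (msupp G).card) ⟨G0, hG0S⟩
  have hE : H.transpose * E = H.transpose * G0 ∧ E * H.transpose = G0 * H.transpose := by
    simpa [hSdef] using hES
  obtain ⟨hA0, hB0⟩ := hE
  refine ⟨E, hA0, hB0, ?_⟩
  have hm1nn : (0:ℝ) ≤ ((msupp (H.transpose * G0)).card : ℝ) := Nat.cast_nonneg _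
  have hm2nn : (0:ℝ) ≤ ((msupp (G0 * H.transpose)).card : ℝ) := Nat.cast_nonneg _
  by_cases hc : ((msupp (G0 * H.transpose)).card : ℝ) < D
  · -- row-based cleaning
    have hRD : (((univ.filter fun c => H.mulVec (E c) ≠ 0) : Finset (Fin m)).card : ℝ) < D := by
      refine lt_of_le_of_lt ?_ hc
      have := rows_nonnull_le H E
      rw [hB0] at this
      exact_mod_cast this
    have hMd : ((msupp (H.transpose * E)).card : ℝ) + ((msupp (E * H.transpose)).card : ℝ) < dk := by
      rw [hA0, hB0]; exact hM1
    obtain ⟨E', hA', hB', hcnt⟩ := helper m n H η dk D hkerN hexpM E hRD hMd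
    have hE'S : E' ∈ S := by
      simp only [hSdef, mem_filter, mem_univ, true_and]
      exact ⟨hA'.trans hA0, hB'.trans hB0⟩
    have hmin := hEmin E' hE'S
    have : η * ((msupp E).card : ℝ) ≤ η * ((msupp E').card : ℝ) := by
      apply mul_le_mul_of_nonneg_left _ (le_of_lt hη)
      exact_mod_cast hmin
    refine le_trans this (le_trans hcnt ?_)
    rw [hA0]
    linarith
  · -- column-based cleaning
    push_neg at hc
    have hsq2 : Real.sqrt 2 < 2 := by
      nlinarith [Real.sq_sqrt (by norm_num : (0:ℝ) ≤ 2), Real.sqrt_nonneg 2]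
    have hDpos : 0 < D := by nlinarith [Real.sqrt_nonneg 2]
    have hm1D : ((msupp (H.transpose * G0)).card : ℝ) < D := by nlinarith
    -- transposed instance
    have hexpN' : ∀ T : Finset (Fin n), (T.card : ℝ) < D →
        η * T.card ≤ (hamWt' (∑ c ∈ T, fun b => H.transpose c b) : ℝ) := by
      intro T hT
      have := hexpN T hT
      simpa [Matrix.transpose_apply] using this
    have hkerM' : ∀ u : Fin m → F2, u ≠ 0 → H.transpose.mulVec u = 0 → dk ≤ (hamWt' u : ℝ) :=
      hkerM
    have hRD' : (((univ.filter fun b => H.transpose.mulVec (E.transpose b) ≠ 0) :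
        Finset (Fin n)).card : ℝ) < D := by
      refine lt_of_le_of_lt ?_ hm1D
      have h1 := rows_nonnull_le H.transpose E.transpose
      have h2 : E.transpose * H.transpose.transpose = (H.transpose * E).transpose :=
        (Matrix.transpose_mul _ _).symm
      rw [h2] at h1
      have h3 : (msupp (H.transpose * E).transpose).card = (msupp (H.transpose * G0)).card := by
        rw [msupp_transpose, hA0]
      rw [h3] at h1
      exact_mod_cast h1
    have hMd' : ((msupp (H.transpose.transpose * E.transpose)).card : ℝ)
        + ((msupp (E.transpose * H.transpose.transpose)).card : ℝ) < dk := by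
      have h1 : H.transpose.transpose * E.transpose = (E * H.transpose).transpose :=
        (Matrix.transpose_mul _ _).symm
      have h2 : E.transpose * H.transpose.transpose = (H.transpose * E).transpose :=
        (Matrix.transpose_mul _ _).symm
      rw [h1, h2, msupp_transpose, msupp_transpose, hA0, hB0]
      linarith
    obtain ⟨E2', hA2, hB2, hcnt2⟩ := helper n m H.transpose η dk D hkerM' hexpN' E.transpose
      hRD' hMd'
    have hE2S : E2'.transpose ∈ S := by
      simp only [hSdef, mem_filter, mem_univ, true_and]
      have e1 : E2' * H = E.transpose * H := by
        have h := hB2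
        rw [Matrix.transpose_transpose] at h
        exact h
      have e2 : H * E2' = H * E.transpose := by
        have h := hA2
        rw [Matrix.transpose_transpose] at h
        exact h
      constructor
      · calc H.transpose * E2'.transpose = (E2' * H).transpose := (Matrix.transpose_mul E2' H).symm
          _ = (E.transpose * H).transpose := by rw [e1]
          _ = H.transpose * E := by rw [Matrix.transpose_mul, Matrix.transpose_transpose]
          _ = H.transpose * G0 := hA0
      · calc E2'.transpose * H.transpose = (H * E2').transpose := (Matrix.transpose_mul H E2').symm
          _ = (H * E.transpose).transpose := by rw [e2]
          _ = E * H.transpose := by rw [Matrix.transpose_mul, Matrix.transpose_transpose]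
          _ = G0 * H.transpose := hB0
    have hmin := hEmin E2'.transpose hE2S
    have hcard2 : (msupp E2'.transpose).card = (msupp E2').card := msupp_transpose _
    have hstep : η * ((msupp E).card : ℝ) ≤ η * ((msupp E2').card : ℝ) := by
      apply mul_le_mul_of_nonneg_left _ (le_of_lt hη)
      rw [← hcard2]
      exact_mod_cast hmin
    refine le_trans hstep (le_trans hcnt2 ?_)
    have h1 : H.transpose.transpose * E.transpose = (E * H.transpose).transpose :=
      (Matrix.transpose_mul _ _).symm
    rw [h1, msupp_transpose, hB0]
    linarith


/-! ### bridges -/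

def indMat {a b : ℕ} (T : Finset (Fin a × Fin b)) : Matrix (Fin a) (Fin b) F2 :=
  fun i j => if (i, j) ∈ T then 1 else 0

lemma indMat_msupp {a b : ℕ} (G : Matrix (Fin a) (Fin b) F2) : indMat (msupp G) = G := by
  funext i j
  simp only [indMat, msupp, mem_filter, mem_univ, true_and]
  by_cases h : G i j = 0
  · simp [h]
  · simp [h, zmod2_ne_zero _ h]

-- generic double-sum computation
lemma pair_sum_eq {a b : ℕ} (T : Finset (Fin a × Fin b)) (f : Fin a × Fin b → F2) :
    ∑ p ∈ T, f p = ∑ i : Fin a, ∑ j : Fin b, (if (i, j) ∈ T then f (i, j) else 0) := by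
  calc ∑ p ∈ T, f p = ∑ p ∈ univ ∩ T, f p := by rw [Finset.univ_inter]
    _ = ∑ p ∈ univ, if p ∈ T then f p else 0 := (Finset.sum_ite_mem _ _ _).symm
    _ = ∑ i : Fin a, ∑ j : Fin b, (if (i, j) ∈ T then f (i, j) else 0) := by
        rw [Fintype.sum_prod_type]

lemma sumX_inl {nc mc : ℕ} (H : Matrix (Fin mc) (Fin nc) F2) (T : Finset (Fin mc × Fin nc))
    (b bt : Fin nc) :
    (∑ p ∈ T, hgpXcheck H p.1 p.2) (Sum.inl (b, bt)) = (H.transpose * indMat T) b bt := by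
  rw [Finset.sum_apply]
  have h1 : ∀ p ∈ T, hgpXcheck H p.1 p.2 (Sum.inl (b, bt)) =
      (fun p : Fin mc × Fin nc => if bt = p.2 then H p.1 b else 0) p := by
    intro p _
    rfl
  rw [Finset.sum_congr rfl h1, pair_sum_eq]
  rw [Matrix.mul_apply]
  refine Finset.sum_congr rfl fun c _ => ?_
  rw [Matrix.transpose_apply]
  have : ∀ j : Fin nc, (if (c, j) ∈ T then (if bt = j then H c b else 0) else 0)
      = if j = bt then (if (c, bt) ∈ T then H c b else 0) else 0 := by
    intro j
    by_cases hj : j = bt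
    · subst hj; simp
    · have hj' : bt ≠ j := fun h => hj h.symm
      simp [hj, hj']
  rw [Finset.sum_congr rfl fun j _ => this j, Finset.sum_ite_eq' univ bt
    (fun _ => if (c, bt) ∈ T then H c b else 0)]
  simp only [mem_univ, if_true]
  by_cases hm : (c, bt) ∈ T
  · simp [hm, indMat, mul_comm]
  · simp [hm, indMat]

lemma sumX_inr {nc mc : ℕ} (H : Matrix (Fin mc) (Fin nc) F2) (T : Finset (Fin mc × Fin nc))
    (c ct : Fin mc) :
    (∑ p ∈ T, hgpXcheck H p.1 p.2) (Sum.inr (c, ct)) = (indMat T * H.transpose) c ct := by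
  rw [Finset.sum_apply]
  have h1 : ∀ p ∈ T, hgpXcheck H p.1 p.2 (Sum.inr (c, ct)) =
      (fun p : Fin mc × Fin nc => if c = p.1 then H ct p.2 else 0) p := by
    intro p _
    rfl
  rw [Finset.sum_congr rfl h1, pair_sum_eq]
  rw [Matrix.mul_apply]
  rw [Finset.sum_comm]
  refine Finset.sum_congr rfl fun j _ => ?_
  have : ∀ i : Fin mc, (if (i, j) ∈ T then (if c = i then H ct j else 0) else 0)
      = if i = c then (if (c, j) ∈ T then H ct j else 0) else 0 := by
    intro i
    by_cases hi : i = c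
    · subst hi; simp
    · have hi' : c ≠ i := fun h => hi h.symm
      simp [hi, hi']
  rw [Finset.sum_congr rfl fun i _ => this i, Finset.sum_ite_eq' univ c
    (fun _ => if (c, j) ∈ T then H ct j else 0)]
  simp only [mem_univ, if_true]
  rw [Matrix.transpose_apply]
  by_cases hm : (c, j) ∈ T
  · simp [hm, indMat]
  · simp [hm, indMat]

lemma sumZ_inl {nc mc : ℕ} (H : Matrix (Fin mc) (Fin nc) F2) (T : Finset (Fin nc × Fin mc))
    (b bt : Fin nc) :
    (∑ p ∈ T, hgpZcheck H p.1 p.2) (Sum.inl (b, bt)) = (indMat T * H) b bt := by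
  rw [Finset.sum_apply]
  have h1 : ∀ p ∈ T, hgpZcheck H p.1 p.2 (Sum.inl (b, bt)) =
      (fun p : Fin nc × Fin mc => if b = p.1 then H p.2 bt else 0) p := by
    intro p _
    rfl
  rw [Finset.sum_congr rfl h1, pair_sum_eq]
  rw [Matrix.mul_apply]
  rw [Finset.sum_comm]
  refine Finset.sum_congr rfl fun j _ => ?_
  have : ∀ i : Fin nc, (if (i, j) ∈ T then (if b = i then H j bt else 0) else 0)
      = if i = b then (if (b, j) ∈ T then H j bt else 0) else 0 := by
    intro i
    by_cases hi : i = b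
    · subst hi; simp
    · have hi' : b ≠ i := fun h => hi h.symm
      simp [hi, hi']
  rw [Finset.sum_congr rfl fun i _ => this i, Finset.sum_ite_eq' univ b
    (fun _ => if (b, j) ∈ T then H j bt else 0)]
  simp only [mem_univ, if_true]
  by_cases hm : (b, j) ∈ T
  · simp [hm, indMat]
  · simp [hm, indMat]

lemma sumZ_inr {nc mc : ℕ} (H : Matrix (Fin mc) (Fin nc) F2) (T : Finset (Fin nc × Fin mc))
    (c ct : Fin mc) :
    (∑ p ∈ T, hgpZcheck H p.1 p.2) (Sum.inr (c, ct)) = (H * indMat T) c ct := by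
  rw [Finset.sum_apply]
  have h1 : ∀ p ∈ T, hgpZcheck H p.1 p.2 (Sum.inr (c, ct)) =
      (fun p : Fin nc × Fin mc => if ct = p.2 then H c p.1 else 0) p := by
    intro p _
    rfl
  rw [Finset.sum_congr rfl h1, pair_sum_eq]
  rw [Matrix.mul_apply]
  refine Finset.sum_congr rfl fun i _ => ?_
  have : ∀ j : Fin mc, (if (i, j) ∈ T then (if ct = j then H c i else 0) else 0)
      = if j = ct then (if (i, ct) ∈ T then H c i else 0) else 0 := by
    intro j
    by_cases hj : j = ct
    · subst hj; simp
    · have hj' : ct ≠ j := fun h => hj h.symm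
      simp [hj, hj']
  rw [Finset.sum_congr rfl fun j _ => this j, Finset.sum_ite_eq' univ ct
    (fun _ => if (i, ct) ∈ T then H c i else 0)]
  simp only [mem_univ, if_true]
  by_cases hm : (i, ct) ∈ T
  · simp [hm, indMat]
  · simp [hm, indMat]

/-- support of a block vector -/
lemma hgpSupp_card {nc mc : ℕ} (x : HGPQubit nc mc → F2)
    (A : Matrix (Fin nc) (Fin nc) F2) (B : Matrix (Fin mc) (Fin mc) F2)
    (hA : ∀ p : Fin nc × Fin nc, x (Sum.inl p) = A p.1 p.2)
    (hB : ∀ p : Fin mc × Fin mc, x (Sum.inr p) = B p.1 p.2) :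
    (hgpSupp x).card = (msupp A).card + (msupp B).card := by
  classical
  have hsplit : hgpSupp x =
      (msupp A).map ⟨Sum.inl, Sum.inl_injective⟩ ∪ (msupp B).map ⟨Sum.inr, Sum.inr_injective⟩ := by
    ext q
    cases q with
    | inl p =>
        simp [hgpSupp, msupp, hA p]
    | inr p =>
        simp [hgpSupp, msupp, hB p]
  rw [hsplit, Finset.card_union_of_disjoint, Finset.card_map, Finset.card_map]
  rw [Finset.disjoint_left]
  rintro q hq1 hq2
  simp only [Finset.mem_map, Function.Embedding.coeFn_mk] at hq1 hq2
  obtain ⟨p1, _, rfl⟩ := hq1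
  obtain ⟨p2, _, h⟩ := hq2
  cases h

/-- Linear check soundness of hypergraph product expander codes.  If the
classical code has `m_cla = ζ·n_cla` checks, minimum distances
`d_cla, d_cla^T ≥ ξ·n_cla` (for the code and its transpose), and both codes have
`(χ·n_cla, η)`-linear-check-expansion, then with `n = n_cla² + m_cla²` and
`χ' = min(√2·χ, ξ)/√(1+ζ²)`, every stabilizer of the HGP of the code with itself of
weight `M < χ'·√n` is the `F₂`-sum of at most `6M/η` distinct checks. -/
theorem hgp_expander_linear_check_soundness
    (nc mc : ℕ) (H : Matrix (Fin mc) (Fin nc) (ZMod 2))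
    (ζ ξ χ η : ℝ) (hζ : (mc : ℝ) = ζ * nc) (hη : 0 < η)
    (hdist : ∀ u : Fin nc → ZMod 2, u ≠ 0 → H.mulVec u = 0 → ξ * nc ≤ (hamWt u : ℝ))
    (hdistT : ∀ w : Fin mc → ZMod 2, w ≠ 0 → H.transpose.mulVec w = 0 → ξ * nc ≤ (hamWt w : ℝ))
    (hexp : ∀ T : Finset (Fin mc), (T.card : ℝ) < χ * nc →
      η * T.card ≤ (hamWt (∑ c ∈ T, fun b => H c b) : ℝ))
    (hexpT : ∀ T : Finset (Fin nc), (T.card : ℝ) < χ * nc →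
      η * T.card ≤ (hamWt (∑ b ∈ T, fun c => H c b) : ℝ)) :
    ∀ (x z : HGPQubit nc mc → ZMod 2),
      x ∈ Submodule.span (ZMod 2) (Set.range fun p : Fin mc × Fin nc => hgpXcheck H p.1 p.2) →
      z ∈ Submodule.span (ZMod 2) (Set.range fun p : Fin nc × Fin mc => hgpZcheck H p.1 p.2) →
      (((hgpSupp x ∪ hgpSupp z).card : ℝ)
        < (min (Real.sqrt 2 * χ) ξ / Real.sqrt (1 + ζ ^ 2)) * Real.sqrt ((nc ^ 2 + mc ^ 2 : ℕ) : ℝ)) →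
      ∃ (TX : Finset (Fin mc × Fin nc)) (TZ : Finset (Fin nc × Fin mc)),
        x = (∑ p ∈ TX, hgpXcheck H p.1 p.2) ∧ z = (∑ p ∈ TZ, hgpZcheck H p.1 p.2) ∧
        ((TX.card : ℝ) + (TZ.card : ℝ)) ≤ 6 * ((hgpSupp x ∪ hgpSupp z).card : ℝ) / η := by
  intro x z hx hz hMlt
  classical
  obtain ⟨T0x, hT0x⟩ := span_f2_eq_finset_sum (fun p : Fin mc × Fin nc => hgpXcheck H p.1 p.2) x hx
  obtain ⟨T0z, hT0z⟩ := span_f2_eq_finset_sum (fun p : Fin nc × Fin mc => hgpZcheck H p.1 p.2) z hz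
  have hMnn : (0:ℝ) ≤ ((hgpSupp x ∪ hgpSupp z).card : ℝ) := Nat.cast_nonneg _
  rcases Nat.eq_zero_or_pos nc with hnc0 | hncpos
  · -- degenerate case nc = 0 (then mc = 0 and everything is empty)
    subst hnc0
    have hmc0 : mc = 0 := by
      have : (mc:ℝ) = 0 := by rw [hζ]; simp
      exact_mod_cast this
    subst hmc0
    have hTx : T0x = ∅ := Finset.eq_empty_of_forall_notMem (fun p _ => p.1.elim0)
    have hTz : T0z = ∅ := Finset.eq_empty_of_forall_notMem (fun p _ => p.1.elim0)
    refine ⟨T0x, T0z, hT0x, hT0z, ?_⟩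
    rw [hTx, hTz]
    simp only [Finset.card_empty, Nat.cast_zero, add_zero]
    exact div_nonneg (mul_nonneg (by norm_num) hMnn) hη.le
  · have hncR : (0:ℝ) < nc := by exact_mod_cast hncpos
    have hbound : ((hgpSupp x ∪ hgpSupp z).card : ℝ) < min (Real.sqrt 2 * χ) ξ * nc := by
      have h1 : ((nc^2 + mc^2 : ℕ) : ℝ) = (nc:ℝ)^2 * (1 + ζ^2) := by
        push_cast
        rw [hζ]
        ring
      have hsq : Real.sqrt ((nc^2 + mc^2 : ℕ) : ℝ) = nc * Real.sqrt (1 + ζ^2) := by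
        rw [h1, Real.sqrt_mul (by positivity), Real.sqrt_sq hncR.le]
      have hpos : 0 < Real.sqrt (1 + ζ^2) := Real.sqrt_pos.mpr (by positivity)
      calc ((hgpSupp x ∪ hgpSupp z).card : ℝ)
          < min (Real.sqrt 2 * χ) ξ / Real.sqrt (1+ζ^2) * (nc * Real.sqrt (1+ζ^2)) := by
            rw [← hsq]; exact hMlt
        _ = min (Real.sqrt 2 * χ) ξ * nc := by field_simp
    have hb1 : ((hgpSupp x ∪ hgpSupp z).card : ℝ) < Real.sqrt 2 * (χ * nc) := by
      calc ((hgpSupp x ∪ hgpSupp z).card : ℝ) < min (Real.sqrt 2 * χ) ξ * nc := hbound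
        _ ≤ Real.sqrt 2 * χ * nc := mul_le_mul_of_nonneg_right (min_le_left _ _) hncR.le
        _ = Real.sqrt 2 * (χ * nc) := by ring
    have hb2 : ((hgpSupp x ∪ hgpSupp z).card : ℝ) < ξ * nc :=
      lt_of_lt_of_le hbound (mul_le_mul_of_nonneg_right (min_le_right _ _) hncR.le)
    -- X side
    have hxinl : ∀ p : Fin nc × Fin nc, x (Sum.inl p) = (H.transpose * indMat T0x) p.1 p.2 := by
      rintro ⟨b, bt⟩
      rw [hT0x]
      exact sumX_inl H T0x b bt
    have hxinr : ∀ p : Fin mc × Fin mc, x (Sum.inr p) = (indMat T0x * H.transpose) p.1 p.2 := by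
      rintro ⟨c, ct⟩
      rw [hT0x]
      exact sumX_inr H T0x c ct
    have hwx : (hgpSupp x).card
        = (msupp (H.transpose * indMat T0x)).card + (msupp (indMat T0x * H.transpose)).card :=
      hgpSupp_card x _ _ hxinl hxinr
    have hwxM : ((hgpSupp x).card : ℝ) ≤ ((hgpSupp x ∪ hgpSupp z).card : ℝ) := by
      have : (hgpSupp x).card ≤ (hgpSupp x ∪ hgpSupp z).card :=
        Finset.card_le_card Finset.subset_union_left
      exact_mod_cast this
    have hwxR : ((msupp (H.transpose * indMat T0x)).card : ℝ)
        + ((msupp (indMat T0x * H.transpose)).card : ℝ) = ((hgpSupp x).card : ℝ) := by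
      rw [hwx]; push_cast; ring
    obtain ⟨Gx, hGxA, hGxB, hGxcnt⟩ := core mc nc H η (ξ*nc) (χ*nc) hη hdist hdistT hexp hexpT
      (indMat T0x) (by rw [hwxR]; linarith) (by rw [hwxR]; linarith)
    have hxeq : x = ∑ p ∈ msupp Gx, hgpXcheck H p.1 p.2 := by
      funext q
      cases q with
      | inl p =>
          obtain ⟨b, bt⟩ := p
          rw [sumX_inl, indMat_msupp, hGxA]
          exact hxinl (b, bt)
      | inr p =>
          obtain ⟨c, ct⟩ := p
          rw [sumX_inr, indMat_msupp, hGxB]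
          exact hxinr (c, ct)
    -- Z side
    have htt : H.transpose.transpose = H := Matrix.transpose_transpose H
    have hzinl : ∀ p : Fin nc × Fin nc, z (Sum.inl p) = (indMat T0z * H) p.1 p.2 := by
      rintro ⟨b, bt⟩
      rw [hT0z]
      exact sumZ_inl H T0z b bt
    have hzinr : ∀ p : Fin mc × Fin mc, z (Sum.inr p) = (H * indMat T0z) p.1 p.2 := by
      rintro ⟨c, ct⟩
      rw [hT0z]
      exact sumZ_inr H T0z c ct
    have hwz : (hgpSupp z).card
        = (msupp (indMat T0z * H)).card + (msupp (H * indMat T0z)).card :=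
      hgpSupp_card z _ _ hzinl hzinr
    have hwzM : ((hgpSupp z).card : ℝ) ≤ ((hgpSupp x ∪ hgpSupp z).card : ℝ) := by
      have : (hgpSupp z).card ≤ (hgpSupp x ∪ hgpSupp z).card :=
        Finset.card_le_card Finset.subset_union_right
      exact_mod_cast this
    have hkerM_z : ∀ u : Fin nc → F2, u ≠ 0 → H.transpose.transpose.mulVec u = 0 →
        ξ * nc ≤ (hamWt u : ℝ) := by
      intro u hu h
      exact hdist u hu (by rwa [htt] at h)
    have hexpM_z : ∀ T : Finset (Fin nc), (T.card : ℝ) < χ * nc →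
        η * T.card ≤ (hamWt (∑ c ∈ T, fun b => H.transpose c b) : ℝ) := by
      intro T hT
      have := hexpT T hT
      simpa [Matrix.transpose_apply] using this
    have hexpN_z : ∀ T : Finset (Fin mc), (T.card : ℝ) < χ * nc →
        η * T.card ≤ (hamWt (∑ b ∈ T, fun c => H.transpose c b) : ℝ) := by
      intro T hT
      have := hexp T hT
      simpa [Matrix.transpose_apply] using this
    have hwzR : ((msupp (H.transpose.transpose * indMat T0z)).card : ℝ)
        + ((msupp (indMat T0z * H.transpose.transpose)).card : ℝ) = ((hgpSupp z).card : ℝ) := by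
      rw [htt, hwz]; push_cast; ring
    obtain ⟨Gz, hGzA, hGzB, hGzcnt⟩ := core nc mc H.transpose η (ξ*nc) (χ*nc) hη hdistT hkerM_z
      hexpM_z hexpN_z (indMat T0z) (by rw [hwzR]; linarith) (by rw [hwzR]; linarith)
    have hGzA' : H * Gz = H * indMat T0z := by rwa [htt] at hGzA
    have hGzB' : Gz * H = indMat T0z * H := by
      have := hGzB
      rwa [htt] at this
    have hzeq : z = ∑ p ∈ msupp Gz, hgpZcheck H p.1 p.2 := by
      funext q
      cases q with
      | inl p =>
          obtain ⟨b, bt⟩ := p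
          rw [sumZ_inl, indMat_msupp, hGzB']
          exact hzinl (b, bt)
      | inr p =>
          obtain ⟨c, ct⟩ := p
          rw [sumZ_inr, indMat_msupp, hGzA']
          exact hzinr (c, ct)
    refine ⟨msupp Gx, msupp Gz, hxeq, hzeq, ?_⟩
    have hcx : η * ((msupp Gx).card : ℝ) ≤ ((hgpSupp x ∪ hgpSupp z).card : ℝ) := by
      refine le_trans hGxcnt ?_
      rw [hwxR]
      exact le_trans hwxM (le_refl _)
    have hcz : η * ((msupp Gz).card : ℝ) ≤ ((hgpSupp x ∪ hgpSupp z).card : ℝ) := by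
      refine le_trans hGzcnt ?_
      rw [hwzR]
      exact le_trans hwzM (le_refl _)
    rw [le_div_iff₀ hη]
    have h1 : (0:ℝ) ≤ ((hgpSupp x ∪ hgpSupp z).card : ℝ) := hMnn
    nlinarith [hcx, hcz]
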